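/- Let r be a positive integer all of whose prime factors p satisfy p ≡ 1 (mod 6), let k be an integer with r dividing 1 + k + k², let l be a positive integer, and set n = r·l. Then the subgroup of GL(3,ℂ) generated by E, B_{n,k} and L_n^{−r} (this is the group C_{n,l}^{(k)}) has order 3·n·l = 3·r·l². -/

import Mathlib

open Matrix

/-- The matrix `E` with entries `E₀₁ = E₁₂ = E₂₀ = 1` and all other entries `0`. -/
noncomputable def Ematrix : Matrix (Fin 3) (Fin 3) ℂ := !![0, 1, 0; 0, 0, 1; 1, 0, 0]

/-- The matrix `B_{n,k} = diag(ν, ν^k, ν^{−1−k})` with `ν = exp(2πi/n)`. -/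
noncomputable def Bmatrix (n : ℕ) (k : ℤ) : Matrix (Fin 3) (Fin 3) ℂ :=
  Matrix.diagonal ![Complex.exp (2 * (Real.pi : ℂ) * Complex.I / (n : ℂ)),
    Complex.exp (2 * (Real.pi : ℂ) * Complex.I / (n : ℂ)) ^ k,
    Complex.exp (2 * (Real.pi : ℂ) * Complex.I / (n : ℂ)) ^ (-1 - k)]

/-- The matrix `L_n = diag(1, ν, ν⁻¹)` with `ν = exp(2πi/n)`. -/
noncomputable def Lmatrix (n : ℕ) : Matrix (Fin 3) (Fin 3) ℂ :=
  Matrix.diagonal ![1, Complex.exp (2 * (Real.pi : ℂ) * Complex.I / (n : ℂ)),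
    (Complex.exp (2 * (Real.pi : ℂ) * Complex.I / (n : ℂ)))⁻¹]

section AuxGroup

lemma card_closure_aux {G : Type*} [Group G] (e b c : G) (p q u : ℕ)
    (hp : 0 < p) (hq : 0 < q) (hu : 0 < u)
    (he : e ^ p = 1) (hb : b ^ q = 1) (hc : c ^ u = 1)
    (hbc : b * c = c * b)
    (β γ δ ε β' γ' δ' ε' : ℤ)
    (h1 : b * e = e * (b ^ β * c ^ γ))
    (h2 : c * e = e * (b ^ δ * c ^ ε))
    (h3 : e * b = b ^ β' * c ^ γ' * e)
    (h4 : e * c = b ^ δ' * c ^ ε' * e)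
    (hinj : Function.Injective (fun x : ZMod p × ZMod q × ZMod u =>
      e ^ x.1.val * (b ^ x.2.1.val * c ^ x.2.2.val))) :
    Nat.card (Subgroup.closure ({e, b, c} : Set G)) = p * q * u := by
  haveI : NeZero p := ⟨hp.ne'⟩
  haveI : NeZero q := ⟨hq.ne'⟩
  haveI : NeZero u := ⟨hu.ne'⟩
  have hcom : Commute b c := hbc
  have hD : ∀ x y x' y' : ℤ, (b ^ x * c ^ y) * (b ^ x' * c ^ y')
      = b ^ (x + x') * c ^ (y + y') := by
    intro x y x' y'
    rw [_root_.zpow_add, _root_.zpow_add, mul_assoc, ← mul_assoc (c ^ y),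
      (hcom.symm.zpow_zpow y x').eq, mul_assoc, mul_assoc]
  have hDpow : ∀ x y z : ℤ, (b ^ x * c ^ y) ^ z = b ^ (x * z) * c ^ (y * z) := by
    intro x y z
    rw [(hcom.zpow_zpow x y).mul_zpow, _root_.zpow_mul, _root_.zpow_mul]
  have conjgen : ∀ g w1 w2 : G, (g⁻¹ * b * g = w1) → (g⁻¹ * c * g = w2) →
      ∀ x y : ℤ, g⁻¹ * (b ^ x * c ^ y) * g = w1 ^ x * w2 ^ y := by
    intro g w1 w2 hw1 hw2 x y
    have hx : g⁻¹ * b ^ x * g = w1 ^ x := by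
      rw [← hw1, show g⁻¹ * b * g = g⁻¹ * b * g⁻¹⁻¹ by rw [inv_inv], conj_zpow, inv_inv]
    have hy : g⁻¹ * c ^ y * g = w2 ^ y := by
      rw [← hw2, show g⁻¹ * c * g = g⁻¹ * c * g⁻¹⁻¹ by rw [inv_inv], conj_zpow, inv_inv]
    rw [← hx, ← hy]
    group
  have stepF : ∀ x y : ℤ, (b ^ x * c ^ y) * e
      = e * (b ^ (β * x + δ * y) * c ^ (γ * x + ε * y)) := by
    intro x y
    have hcb : e⁻¹ * b * e = b ^ β * c ^ γ := by
      rw [mul_assoc, h1, ← mul_assoc, inv_mul_cancel, one_mul]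
    have hcc : e⁻¹ * c * e = b ^ δ * c ^ ε := by
      rw [mul_assoc, h2, ← mul_assoc, inv_mul_cancel, one_mul]
    have key := conjgen e _ _ hcb hcc x y
    rw [hDpow, hDpow, hD] at key
    have : e * (e⁻¹ * (b ^ x * c ^ y) * e) = (b ^ x * c ^ y) * e := by group
    rw [← this, key]
  have stepB : ∀ x y : ℤ, (b ^ x * c ^ y) * e⁻¹
      = e⁻¹ * (b ^ (β' * x + δ' * y) * c ^ (γ' * x + ε' * y)) := by
    intro x y
    have hcb : (e⁻¹)⁻¹ * b * e⁻¹ = b ^ β' * c ^ γ' := by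
      rw [inv_inv, h3, mul_assoc, mul_inv_cancel, mul_one]
    have hcc : (e⁻¹)⁻¹ * c * e⁻¹ = b ^ δ' * c ^ ε' := by
      rw [inv_inv, h4, mul_assoc, mul_inv_cancel, mul_one]
    have key := conjgen e⁻¹ _ _ hcb hcc x y
    rw [hDpow, hDpow, hD] at key
    have : e⁻¹ * ((e⁻¹)⁻¹ * (b ^ x * c ^ y) * e⁻¹) = (b ^ x * c ^ y) * e⁻¹ := by group
    rw [← this, key]
  have move : ∀ j : ℤ, ∀ x y : ℤ, ∃ x' y' : ℤ,
      (b ^ x * c ^ y) * e ^ j = e ^ j * (b ^ x' * c ^ y') := by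
    intro j
    induction j using Int.induction_on with
    | zero => exact fun x y => ⟨x, y, by simp⟩
    | succ j ih =>
      intro x y
      obtain ⟨x', y', h'⟩ := ih x y
      refine ⟨β * x' + δ * y', γ * x' + ε * y', ?_⟩
      rw [_root_.zpow_add_one, ← mul_assoc, h', mul_assoc, stepF x' y', ← mul_assoc]
    | pred j ih =>
      intro x y
      obtain ⟨x', y', h'⟩ := ih x y
      refine ⟨β' * x' + δ' * y', γ' * x' + ε' * y', ?_⟩
      rw [_root_.zpow_sub_one, ← mul_assoc, h', mul_assoc, stepB x' y', ← mul_assoc]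
  set SG : Subgroup G :=
    { carrier := {g | ∃ i x y : ℤ, g = e ^ i * (b ^ x * c ^ y)}
      one_mem' := ⟨0, 0, 0, by simp⟩
      mul_mem' := by
        rintro g g' ⟨i, x, y, rfl⟩ ⟨j, x', y', rfl⟩
        obtain ⟨x'', y'', h''⟩ := move j x y
        refine ⟨i + j, x'' + x', y'' + y', ?_⟩
        rw [_root_.zpow_add, ← hD]
        calc e ^ i * (b ^ x * c ^ y) * (e ^ j * (b ^ x' * c ^ y'))
            = e ^ i * ((b ^ x * c ^ y) * e ^ j) * (b ^ x' * c ^ y') := by group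
          _ = e ^ i * (e ^ j * (b ^ x'' * c ^ y'')) * (b ^ x' * c ^ y') := by rw [h'']
          _ = e ^ i * e ^ j * (b ^ x'' * c ^ y'' * (b ^ x' * c ^ y')) := by group
      inv_mem' := by
        rintro g ⟨i, x, y, rfl⟩
        obtain ⟨x', y', h'⟩ := move (-i) (-x) (-y)
        refine ⟨-i, x', y', ?_⟩
        have hinv : (b ^ x * c ^ y)⁻¹ = b ^ (-x) * c ^ (-y) := by
          rw [_root_.mul_inv_rev, ← _root_.zpow_neg, ← _root_.zpow_neg, (hcom.symm.zpow_zpow (-y) (-x)).eq]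
        rw [_root_.mul_inv_rev, hinv, ← _root_.zpow_neg, h'] } with hSGdef
  have hSG : Subgroup.closure ({e, b, c} : Set G) = SG := by
    apply le_antisymm
    · rw [Subgroup.closure_le]
      rintro g hg
      simp only [Set.mem_insert_iff, Set.mem_singleton_iff] at hg
      rcases hg with rfl | rfl | rfl
      · exact ⟨1, 0, 0, by simp⟩
      · exact ⟨0, 1, 0, by simp⟩
      · exact ⟨0, 0, 1, by simp⟩
    · rintro g ⟨i, x, y, rfl⟩
      have he' : e ∈ Subgroup.closure ({e, b, c} : Set G) := Subgroup.subset_closure (by simp)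
      have hb' : b ∈ Subgroup.closure ({e, b, c} : Set G) := Subgroup.subset_closure (by simp)
      have hc' : c ∈ Subgroup.closure ({e, b, c} : Set G) := Subgroup.subset_closure (by simp)
      exact mul_mem (zpow_mem he' i) (mul_mem (zpow_mem hb' x) (zpow_mem hc' y))
  have hred : ∀ (g : G) (m : ℕ) (_ : NeZero m), g ^ m = 1 → ∀ i : ℤ,
      g ^ i = g ^ ((i : ZMod m).val) := by
    intro g m hm hg i
    conv_lhs => rw [show i = (m : ℤ) * (i / m) + i % m from (Int.mul_ediv_add_emod i m).symm]
    rw [_root_.zpow_add, _root_.zpow_mul, _root_.zpow_natCast, hg, _root_.one_zpow, one_mul,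
      show (i % (m : ℤ)) = ((i : ZMod m).val : ℤ) from (ZMod.val_intCast i).symm, _root_.zpow_natCast]
  have hset : (Subgroup.closure ({e, b, c} : Set G) : Set G)
      = Set.range (fun x : ZMod p × ZMod q × ZMod u =>
        e ^ x.1.val * (b ^ x.2.1.val * c ^ x.2.2.val)) := by
    ext g
    constructor
    · intro hg
      have hg' : g ∈ SG := by rw [← hSG]; exact hg
      obtain ⟨i, x, y, rfl⟩ := hg'
      exact ⟨((i : ZMod p), (x : ZMod q), (y : ZMod u)), by
        simp only []
        rw [← hred e p ‹_› he i, ← hred b q ‹_› hb x, ← hred c u ‹_› hc y]⟩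
    · rintro ⟨⟨i, x, y⟩, rfl⟩
      have : e ^ i.val * (b ^ x.val * c ^ y.val) ∈ SG :=
        ⟨(i.val : ℤ), (x.val : ℤ), (y.val : ℤ), by simp only [_root_.zpow_natCast]⟩
      rw [← hSG] at this
      exact this
  calc Nat.card (Subgroup.closure ({e, b, c} : Set G))
      = Nat.card (Set.range (fun x : ZMod p × ZMod q × ZMod u =>
          e ^ x.1.val * (b ^ x.2.1.val * c ^ x.2.2.val))) :=
        Nat.card_congr (Equiv.setCongr hset)
    _ = Nat.card (ZMod p × ZMod q × ZMod u) := Nat.card_range_of_injective hinj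
    _ = p * q * u := by
        rw [Nat.card_prod, Nat.card_prod, Nat.card_zmod, Nat.card_zmod, Nat.card_zmod, mul_assoc]

end AuxGroup

section AuxMatrix

noncomputable def DUnit (x y z : ℂˣ) : GL (Fin 3) ℂ :=
  ⟨Matrix.diagonal ![(x : ℂ), (y : ℂ), (z : ℂ)],
   Matrix.diagonal ![((x⁻¹ : ℂˣ) : ℂ), ((y⁻¹ : ℂˣ) : ℂ), ((z⁻¹ : ℂˣ) : ℂ)],
   by
    ext i j
    rw [Matrix.diagonal_mul_diagonal]
    fin_cases i <;> fin_cases j <;> simp [Matrix.diagonal, Matrix.one_apply],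
   by
    ext i j
    rw [Matrix.diagonal_mul_diagonal]
    fin_cases i <;> fin_cases j <;> simp [Matrix.diagonal, Matrix.one_apply]⟩

noncomputable def DUhom : (ℂˣ × ℂˣ × ℂˣ) →* GL (Fin 3) ℂ where
  toFun p := DUnit p.1 p.2.1 p.2.2
  map_one' := by
    apply Units.ext
    show Matrix.diagonal _ = (1 : GL (Fin 3) ℂ).val
    rw [Units.val_one]
    ext i j
    fin_cases i <;> fin_cases j <;> simp [Matrix.diagonal, Matrix.one_apply]
  map_mul' p q := by
    apply Units.ext
    show Matrix.diagonal _ = (DUnit _ _ _ * DUnit _ _ _).val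
    rw [Units.val_mul]
    show _ = Matrix.diagonal _ * Matrix.diagonal _
    rw [Matrix.diagonal_mul_diagonal]
    ext i j
    fin_cases i <;> fin_cases j <;> simp [Matrix.diagonal]

theorem DUhom_val (x y z : ℂˣ) :
    (DUhom (x, y, z)).val = Matrix.diagonal ![(x : ℂ), (y : ℂ), (z : ℂ)] := rfl

lemma prod3_zpow (x y z : ℂˣ) (m : ℤ) :
    ((x, y, z) : ℂˣ × ℂˣ × ℂˣ) ^ m = (x ^ m, y ^ m, z ^ m) := by
  refine Prod.ext ?_ (Prod.ext ?_ ?_)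
  · exact map_zpow (MonoidHom.fst ℂˣ (ℂˣ × ℂˣ)) _ m
  · exact map_zpow ((MonoidHom.fst ℂˣ ℂˣ).comp (MonoidHom.snd ℂˣ (ℂˣ × ℂˣ))) _ m
  · exact map_zpow ((MonoidHom.snd ℂˣ ℂˣ).comp (MonoidHom.snd ℂˣ (ℂˣ × ℂˣ))) _ m

lemma DUhom_zpow (x y z : ℂˣ) (m : ℤ) :
    DUhom (x, y, z) ^ m = DUhom (x ^ m, y ^ m, z ^ m) := by
  rw [← map_zpow, prod3_zpow]

lemma DUhom_mul (x y z x' y' z' : ℂˣ) :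
    DUhom (x, y, z) * DUhom (x', y', z') = DUhom (x * x', y * y', z * z') := by
  rw [← _root_.map_mul]
  rfl

lemma swap_lemma (E : GL (Fin 3) ℂ) (hE : E.val = Ematrix) (x y z : ℂˣ) :
    DUhom (x, y, z) * E = E * DUhom (z, x, y) := by
  apply Units.ext
  rw [Units.val_mul, Units.val_mul, hE, DUhom_val, DUhom_val]
  ext i j
  fin_cases i <;> fin_cases j <;>
    simp [Ematrix, Matrix.mul_apply, Matrix.diagonal, Fin.sum_univ_three, Matrix.vecHead,
      Matrix.vecTail]

lemma Epow3 (E : GL (Fin 3) ℂ) (hE : E.val = Ematrix) : E ^ 3 = 1 := by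
  apply Units.ext
  rw [Units.val_pow_eq_pow_val, hE, Units.val_one]
  ext i j
  fin_cases i <;> fin_cases j <;>
    simp [Ematrix, _root_.pow_succ, Matrix.mul_apply, Fin.sum_univ_three, Matrix.one_apply,
      Matrix.vecHead, Matrix.vecTail]

lemma pow_diag_inj (p1 p2 : ℕ) (hp1 : p1 < 3) (hp2 : p2 < 3)
    (v w : Fin 3 → ℂ) (hv : ∀ i, v i ≠ 0)
    (h : Ematrix ^ p1 * Matrix.diagonal v = Ematrix ^ p2 * Matrix.diagonal w) : p1 = p2 := by
  interval_cases p1 <;> interval_cases p2 <;> try rfl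
  all_goals {
    exfalso
    have h00 := congrFun (congrFun h 0) 0
    have h01 := congrFun (congrFun h 0) 1
    have h02 := congrFun (congrFun h 0) 2
    simp [Ematrix, Matrix.mul_apply, Fin.sum_univ_three, Matrix.diagonal, _root_.pow_succ,
      Matrix.one_apply, Matrix.vecHead, Matrix.vecTail] at h00 h01 h02
    first
      | exact hv 0 h00
      | exact hv 1 h01
      | exact hv 2 h02 }

end AuxMatrix

/-- The group `C_{n,l}^{(k)}`, generated by `E`, `B_{n,k}` and `L_n^{−r}` inside `GL(3,ℂ)`,
where `n = r·l`, has order `3·n·l`. -/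
theorem C_nlk_order (r : ℕ) (hr : 0 < r)
    (hrprime : ∀ p : ℕ, p.Prime → p ∣ r → p % 6 = 1)
    (k : ℤ) (hk : (r : ℤ) ∣ 1 + k + k ^ 2)
    (l : ℕ) (hl : 0 < l) (n : ℕ) (hn : n = r * l)
    (E B L : GL (Fin 3) ℂ)
    (hE : E.val = Ematrix) (hB : B.val = Bmatrix n k) (hL : L.val = Lmatrix n) :
    Nat.card ↥(Subgroup.closure ({E, B, L ^ (-(r : ℤ))} : Set (GL (Fin 3) ℂ)))
      = 3 * n * l := by
  have hn0 : n ≠ 0 := by subst hn; exact Nat.mul_ne_zero hr.ne' hl.ne'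
  haveI : NeZero n := ⟨hn0⟩
  haveI : NeZero l := ⟨hl.ne'⟩
  haveI : NeZero (3 : ℕ) := ⟨by norm_num⟩
  obtain ⟨t, ht⟩ := hk
  set ζc : ℂ := Complex.exp (2 * (Real.pi : ℂ) * Complex.I / (n : ℂ)) with hζc
  have hprim : IsPrimitiveRoot ζc n := Complex.isPrimitiveRoot_exp n hn0
  have hζ0 : ζc ≠ 0 := Complex.exp_ne_zero _
  set ζ : ℂˣ := Units.mk0 ζc hζ0 with hζdef
  have hζval : (ζ : ℂ) = ζc := rfl
  have hζcoe : ∀ m : ℤ, ((ζ ^ m : ℂˣ) : ℂ) = ζc ^ m := fun m => by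
    rw [Units.val_zpow_eq_zpow_val, hζval]
  have hζn : ζ ^ (n : ℕ) = 1 := by
    apply Units.ext
    rw [Units.val_pow_eq_pow_val, hζval, Units.val_one]
    exact hprim.pow_eq_one
  have hzn : ∀ m : ℤ, (ζ ^ m) ^ (n : ℕ) = 1 := by
    intro m
    rw [← _root_.zpow_natCast, ← _root_.zpow_mul, mul_comm, _root_.zpow_mul, _root_.zpow_natCast, hζn, _root_.one_zpow]
  -- generators as diagonal units
  have hBe : B = DUhom (ζ ^ (1 : ℤ), ζ ^ k, ζ ^ (-1 - k)) := by
    apply Units.ext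
    rw [hB, DUhom_val]
    unfold Bmatrix
    refine congrArg Matrix.diagonal ?_
    funext i
    fin_cases i <;> simp [hζcoe, hζval, hζc]
  have hCe : L ^ (-(r : ℤ)) = DUhom (ζ ^ (0 : ℤ), ζ ^ (-(r : ℤ)), ζ ^ (r : ℤ)) := by
    have hLe : L = DUhom (ζ ^ (0 : ℤ), ζ ^ (1 : ℤ), ζ ^ (-1 : ℤ)) := by
      apply Units.ext
      rw [hL, DUhom_val]
      unfold Lmatrix
      refine congrArg Matrix.diagonal ?_
      funext i
      fin_cases i <;> simp [hζcoe, hζval, hζc]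
    rw [hLe, DUhom_zpow, ← _root_.zpow_mul, ← _root_.zpow_mul, ← _root_.zpow_mul]
    norm_num
  have tripeq : ∀ a1 a2 a3 b1 b2 b3 : ℂˣ, a1 = b1 → a2 = b2 → a3 = b3 →
      DUhom (a1, a2, a3) = DUhom (b1, b2, b3) := by
    intro a1 a2 a3 b1 b2 b3 e1 e2 e3
    rw [e1, e2, e3]
  have hcollapse : ∀ m s : ℤ, (ζ ^ m) ^ s = ζ ^ (m * s) := fun m s =>
    (_root_.zpow_mul ζ m s).symm
  have hCl : ∀ m : ℤ, (n : ℤ) ∣ m → ζ ^ m = 1 := by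
    rintro m ⟨s, rfl⟩
    rw [_root_.zpow_mul, _root_.zpow_natCast, hζn, _root_.one_zpow]
  have hBC : ∀ x y : ℤ, B ^ x * (L ^ (-(r : ℤ))) ^ y
      = DUhom (ζ ^ x, ζ ^ (k * x - r * y), ζ ^ ((-1 - k) * x + r * y)) := by
    intro x y
    rw [hBe, hCe, DUhom_zpow, DUhom_zpow, DUhom_mul, hcollapse, hcollapse, hcollapse,
      hcollapse, hcollapse, hcollapse, ← _root_.zpow_add, ← _root_.zpow_add, ← _root_.zpow_add]
    exact tripeq _ _ _ _ _ _ (by congr 1; try ring) (by congr 1; try ring) (by congr 1; try ring)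
  -- the relations
  have h1 : B * E = E * (B ^ (-1 - k) * (L ^ (-(r : ℤ))) ^ (-t)) := by
    rw [hBC (-1 - k) (-t),
      show k * (-1 - k) - (r : ℤ) * (-t) = 1 by linear_combination -ht,
      show (-1 - k) * (-1 - k) + (r : ℤ) * (-t) = k by linear_combination ht,
      hBe]
    exact swap_lemma E hE (ζ ^ (1 : ℤ)) (ζ ^ k) (ζ ^ (-1 - k))
  have h2 : (L ^ (-(r : ℤ))) * E = E * (B ^ (r : ℤ) * (L ^ (-(r : ℤ))) ^ k) := by
    rw [hBC (r : ℤ) k,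
      show k * (r : ℤ) - (r : ℤ) * k = 0 by ring,
      show (-1 - k) * (r : ℤ) + (r : ℤ) * k = -(r : ℤ) by ring,
      hCe]
    exact swap_lemma E hE (ζ ^ (0 : ℤ)) (ζ ^ (-(r : ℤ))) (ζ ^ (r : ℤ))
  have h3 : E * B = (B ^ k * (L ^ (-(r : ℤ))) ^ t) * E := by
    rw [hBC k t,
      show k * k - (r : ℤ) * t = -1 - k by linear_combination ht,
      show (-1 - k) * k + (r : ℤ) * t = 1 by linear_combination -ht,
      hBe]
    exact (swap_lemma E hE (ζ ^ k) (ζ ^ (-1 - k)) (ζ ^ (1 : ℤ))).symm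
  have h4 : E * (L ^ (-(r : ℤ))) = (B ^ (-(r : ℤ)) * (L ^ (-(r : ℤ))) ^ (-1 - k)) * E := by
    rw [hBC (-(r : ℤ)) (-1 - k),
      show k * (-(r : ℤ)) - (r : ℤ) * (-1 - k) = (r : ℤ) by ring,
      show (-1 - k) * (-(r : ℤ)) + (r : ℤ) * (-1 - k) = 0 by ring,
      hCe]
    exact (swap_lemma E hE (ζ ^ (-(r : ℤ))) (ζ ^ (r : ℤ)) (ζ ^ (0 : ℤ))).symm
  have hb : B ^ n = 1 := by
    rw [hBe, ← _root_.zpow_natCast (DUhom _) n, DUhom_zpow, hcollapse, hcollapse, hcollapse]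
    have g1 := hCl ((1 : ℤ) * n) ⟨1, by ring⟩
    have g2 := hCl (k * n) ⟨k, by ring⟩
    have g3 := hCl ((-1 - k) * n) ⟨-1 - k, by ring⟩
    rw [g1, g2, g3]
    exact map_one DUhom
  have hc : (L ^ (-(r : ℤ))) ^ l = 1 := by
    rw [hCe, ← _root_.zpow_natCast (DUhom _) l, DUhom_zpow, hcollapse, hcollapse, hcollapse]
    have g1 := hCl ((0 : ℤ) * l) ⟨0, by ring⟩
    have g2 := hCl ((-(r : ℤ)) * l) ⟨-1, by rw [hn]; push_cast; ring⟩
    have g3 := hCl (((r : ℤ)) * l) ⟨1, by rw [hn]; push_cast; ring⟩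
    rw [g1, g2, g3]
    exact map_one DUhom
  have hbc : B * (L ^ (-(r : ℤ))) = (L ^ (-(r : ℤ))) * B := by
    rw [hBe, hCe, DUhom_mul, DUhom_mul, mul_comm (ζ ^ (1 : ℤ)), mul_comm (ζ ^ k),
      mul_comm (ζ ^ (-1 - k))]
  -- injectivity
  have hdvd : ∀ x y : ℤ, ζc ^ x = ζc ^ y → (n : ℤ) ∣ x - y := by
    intro x y hxy
    rw [← hprim.zpow_eq_one_iff_dvd, zpow_sub₀ hζ0, hxy, div_self (zpow_ne_zero _ hζ0)]
  have hinj : Function.Injective (fun x : ZMod 3 × ZMod n × ZMod l =>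
      E ^ x.1.val * (B ^ x.2.1.val * (L ^ (-(r : ℤ))) ^ x.2.2.val)) := by
    rintro ⟨i, a, b⟩ ⟨j, c, d⟩ hEq
    simp only [] at hEq
    have hBCn : ∀ (a' : ZMod n) (b' : ZMod l),
        B ^ a'.val * (L ^ (-(r : ℤ))) ^ b'.val
          = DUhom (ζ ^ (a'.val : ℤ), ζ ^ (k * a'.val - r * b'.val),
              ζ ^ ((-1 - k) * a'.val + r * b'.val)) := by
      intro a' b'
      rw [← _root_.zpow_natCast B, ← _root_.zpow_natCast (L ^ (-(r : ℤ))), hBC]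
    rw [hBCn a b, hBCn c d] at hEq
    have hval : i.val = j.val := by
      have hm := congrArg (fun g : GL (Fin 3) ℂ => g.val) hEq
      simp only [Units.val_mul, Units.val_pow_eq_pow_val, hE, DUhom_val] at hm
      refine pow_diag_inj i.val j.val (ZMod.val_lt i) (ZMod.val_lt j) _ _ ?_ hm
      intro idx
      fin_cases idx <;> simp [hζcoe] <;> exact zpow_ne_zero _ hζ0
    rw [hval] at hEq
    have hDeq := mul_left_cancel hEq
    have hm := congrArg Units.val hDeq
    rw [DUhom_val, DUhom_val] at hm
    have hvec := Matrix.diagonal_injective hm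
    have e0 : ζc ^ ((a.val : ℤ)) = ζc ^ ((c.val : ℤ)) := by
      have := congrFun hvec 0
      simpa [hζcoe] using this
    have e1 : ζc ^ (k * a.val - r * b.val) = ζc ^ (k * c.val - r * d.val) := by
      have := congrFun hvec 1
      simpa [hζcoe] using this
    have hac : a = c := by
      have h := hdvd _ _ e0
      have hb1 := ZMod.val_lt a
      have hb2 := ZMod.val_lt c
      have h0 := Int.eq_zero_of_abs_lt_dvd h (by rw [abs_lt]; constructor <;> omega)
      have : a.val = c.val := by omega
      exact ZMod.val_injective _ this
    have hbd : b = d := by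
      rw [hac] at e1
      have h := hdvd _ _ e1
      rw [show (k * c.val - r * b.val) - (k * c.val - r * d.val)
          = (r : ℤ) * ((d.val : ℤ) - (b.val : ℤ)) by ring, hn] at h
      obtain ⟨cq, hcq⟩ := h
      have hr0 : (r : ℤ) ≠ 0 := by exact_mod_cast hr.ne'
      have hl' : (l : ℤ) ∣ ((d.val : ℤ) - (b.val : ℤ)) := by
        refine ⟨cq, mul_left_cancel₀ hr0 ?_⟩
        push_cast at hcq ⊢
        linear_combination hcq
      have hb1 := ZMod.val_lt b
      have hb2 := ZMod.val_lt d
      have h0 := Int.eq_zero_of_abs_lt_dvd hl' (by rw [abs_lt]; constructor <;> omega)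
      have : b.val = d.val := by omega
      exact ZMod.val_injective _ this
    have hij : i = j := ZMod.val_injective _ hval
    simp [Prod.ext_iff]
    exact ⟨hij, hac, hbd⟩
  exact card_closure_aux E B (L ^ (-(r : ℤ))) 3 n l (by norm_num) (Nat.pos_of_ne_zero hn0) hl
    (Epow3 E hE) hb hc hbc (-1 - k) (-t) (r : ℤ) k k t (-(r : ℤ)) (-1 - k) h1 h2 h3 h4 hinj
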